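/- The center of the free associative algebra T(V) on a vector space V of dimension at least 2 over a field is trivial (equals the scalars). -/

import Mathlib

open MonoidAlgebra in
lemma central_monoidAlgebra_freeMonoid_aux (K : Type*) [Field K] (ι : Type*) [Nontrivial ι]
    (f : MonoidAlgebra K (FreeMonoid ι)) (hf : ∀ g, f * g = g * f) :
    ∃ c : K, f = algebraMap K (MonoidAlgebra K (FreeMonoid ι)) c := by
  classical
  refine ⟨f.coeff 1, ?_⟩
  have halg : (algebraMap K (MonoidAlgebra K (FreeMonoid ι))) (f.coeff 1) = single 1 (f.coeff 1) := rfl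
  rw [halg]
  ext w
  by_cases hw : w = 1
  · subst hw; simp
  · rw [coeff_single_apply, if_neg (fun h => hw h.symm)]
    -- w corresponds to a nonempty list
    have hl : FreeMonoid.toList w ≠ [] := by
      intro h
      apply hw
      apply FreeMonoid.toList.injective
      simpa using h
    obtain ⟨a, t, hat⟩ : ∃ a t, FreeMonoid.toList w = a :: t := by
      cases h : FreeMonoid.toList w with
      | nil => exact absurd h hl
      | cons a t => exact ⟨a, t, rfl⟩
    obtain ⟨b, hb⟩ := exists_ne a
    have h1 : (f * single (FreeMonoid.of b) (1 : K)).coeff (w * FreeMonoid.of b) = f.coeff w * 1 :=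
      coeff_mul_single_eq_coeff_mul (x := f) w fun c _ => mul_right_cancel_iff
    have h2 : (single (FreeMonoid.of b) (1 : K) * f).coeff (w * FreeMonoid.of b) = 0 := by
      apply single_mul_apply_of_not_exists_mul
      rintro ⟨d, hd⟩
      have := congrArg FreeMonoid.toList hd
      simp only [FreeMonoid.toList_mul, FreeMonoid.toList_of, hat] at this
      rw [List.cons_append] at this
      exact hb (List.cons.injEq .. ▸ this).1.symm
    rw [hf (single (FreeMonoid.of b) (1 : K))] at h1
    rw [h2] at h1
    rw [← mul_one (f.coeff w), ← h1]

/-- The center of the free associative (tensor) algebra `T(V)` on a vector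
space `V` of dimension at least 2 over a field is trivial: it consists of the
scalars only. -/
theorem center_tensorAlgebra_eq_bot (K : Type*) [Field K] (V : Type*)
    [AddCommGroup V] [Module K V] (h : 2 ≤ Module.rank K V) :
    Subalgebra.center K (TensorAlgebra K V) = ⊥ := by
  classical
  set ι := Module.Free.ChooseBasisIndex K V
  have hι : Nontrivial ι := by
    rw [← Cardinal.one_lt_iff_nontrivial]
    have hr := Module.Free.rank_eq_card_chooseBasisIndex K V
    calc (1 : Cardinal) < 2 := Cardinal.one_lt_two
      _ ≤ Module.rank K V := h
      _ = Cardinal.mk ι := hr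
  let e : TensorAlgebra K V ≃ₐ[K] MonoidAlgebra K (FreeMonoid ι) :=
    (TensorAlgebra.equivFreeAlgebra (Module.Free.chooseBasis K V)).trans
      FreeAlgebra.equivMonoidAlgebraFreeMonoid
  refine le_antisymm ?_ bot_le
  intro z hz
  have hz' : ∀ g, e z * g = g * e z := by
    intro g
    have hc := (Subalgebra.mem_center_iff.mp hz) (e.symm g)
    calc e z * g = e (z * e.symm g) := by rw [map_mul, AlgEquiv.apply_symm_apply]
      _ = e (e.symm g * z) := by rw [← hc]
      _ = g * e z := by rw [map_mul, AlgEquiv.apply_symm_apply]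
  obtain ⟨c, hc⟩ := central_monoidAlgebra_freeMonoid_aux K ι (e z) hz'
  have hzc : z = algebraMap K (TensorAlgebra K V) c := by
    apply e.injective
    rw [hc, AlgEquiv.commutes]
  rw [hzc]
  exact Subalgebra.algebraMap_mem ⊥ c
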